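/- Let F be a field, let E be a finite index set, and let G be a matrix over F with columns indexed by E and rank(G) ≥ 1. Then the minimum Hamming weight of a nonzero vector in the row space of G equals min{|Y| : Y ⊆ E, rank(G(E \ Y)) < rank(G)}, where G(X) denotes the submatrix of G consisting of the columns indexed by X. -/

import Mathlib

/-- The rank of the submatrix of `G` consisting of the columns indexed by `S`. -/
noncomputable def colRank {K : Type} [Field K] {ι E : Type} [Fintype ι] [Fintype E]
    (G : Matrix ι E K) (S : Finset E) : ℕ :=
  (G.submatrix id (fun x : {e // e ∈ S} => (x : E))).rank

section Aux

variable {K : Type} [Field K] {ι E : Type} [Fintype ι] [Fintype E]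

lemma colRank_eq_finrank_map (G : Matrix ι E K) (S : Finset E) :
    colRank G S =
      Module.finrank K ((Submodule.span K (Set.range fun i : ι => G i)).map
        (LinearMap.funLeft K K (fun x : {e // e ∈ S} => (x : E)))) := by
  rw [colRank, Matrix.rank_eq_finrank_span_row, Matrix.row]
  have : Submodule.span K (Set.range (G.submatrix id (fun x : {e // e ∈ S} => (x : E)))) =
      (Submodule.span K (Set.range fun i : ι => G i)).map
        (LinearMap.funLeft K K (fun x : {e // e ∈ S} => (x : E))) := by
    rw [← Submodule.span_image, ← Set.range_comp]
    rfl
  rw [this]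

lemma finrank_map_lt_iff {V W : Type} [AddCommGroup V] [Module K V] [AddCommGroup W]
    [Module K W] [FiniteDimensional K V] (p : Submodule K V) (f : V →ₗ[K] W) :
    Module.finrank K (p.map f) < Module.finrank K p ↔
      ∃ v ∈ p, v ≠ 0 ∧ f v = 0 := by
  have h := LinearMap.finrank_range_add_finrank_ker (f.comp p.subtype)
  have hr : LinearMap.range (f.comp p.subtype) = p.map f := by
    rw [LinearMap.range_comp, Submodule.range_subtype]
  rw [hr] at h
  constructor
  · intro hlt
    have hk : LinearMap.ker (f.comp p.subtype) ≠ ⊥ := by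
      intro hbot
      rw [hbot, finrank_bot] at h
      omega
    obtain ⟨⟨v, hv⟩, hker, hne⟩ := Submodule.exists_mem_ne_zero_of_ne_bot hk
    refine ⟨v, hv, ?_, hker⟩
    simpa [Subtype.ext_iff] using hne
  · rintro ⟨v, hv, hne, hfv⟩
    have hk : LinearMap.ker (f.comp p.subtype) ≠ ⊥ := by
      intro hbot
      have : (⟨v, hv⟩ : p) = 0 := by
        have : (⟨v, hv⟩ : p) ∈ LinearMap.ker (f.comp p.subtype) := by simpa using hfv
        simpa [hbot] using this
      exact hne (by simpa [Subtype.ext_iff] using this)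
    have hk2 : Module.finrank K (LinearMap.ker (f.comp p.subtype)) ≠ 0 := by
      rwa [Ne, Submodule.finrank_eq_zero]
    omega

lemma colRank_lt_iff [DecidableEq E] (G : Matrix ι E K) (Y : Finset E) :
    colRank G (Finset.univ \ Y) < G.rank ↔
      ∃ v ∈ Submodule.span K (Set.range fun i : ι => G i),
        v ≠ 0 ∧ ∀ e ∉ Y, v e = 0 := by
  rw [colRank_eq_finrank_map, Matrix.rank_eq_finrank_span_row, Matrix.row, finrank_map_lt_iff]
  constructor
  · rintro ⟨v, hv, hne, hfv⟩
    refine ⟨v, hv, hne, fun e he => ?_⟩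
    have := congrFun hfv ⟨e, by simp [he]⟩
    simpa [LinearMap.funLeft] using this
  · rintro ⟨v, hv, hne, hz⟩
    refine ⟨v, hv, hne, ?_⟩
    funext x
    have hx : (x : E) ∉ Y := by
      have := x.2
      simp only [Finset.mem_sdiff, Finset.mem_univ, true_and] at this
      exact this
    simpa [LinearMap.funLeft] using hz x hx

end Aux

/-- The minimum Hamming weight of a nonzero vector in the row space of `G` equals
`min {|Y| : Y ⊆ E, rank(G(E \ Y)) < rank(G)}`. -/
theorem stmt12 {K : Type} [Field K] [DecidableEq K] {ι E : Type}
    [Fintype ι] [Fintype E] [DecidableEq E]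
    (G : Matrix ι E K) (hG : 1 ≤ G.rank) :
    sInf {w : ℕ | ∃ v ∈ Submodule.span K (Set.range fun i : ι => G i),
        v ≠ (0 : E → K) ∧ hammingNorm v = w} =
    sInf {m : ℕ | ∃ Y : Finset E,
        colRank G (Finset.univ \ Y) < G.rank ∧ Y.card = m} := by
  set W := Submodule.span K (Set.range fun i : ι => G i) with hW
  set A := {w : ℕ | ∃ v ∈ W, v ≠ (0 : E → K) ∧ hammingNorm v = w} with hA
  set B := {m : ℕ | ∃ Y : Finset E, colRank G (Finset.univ \ Y) < G.rank ∧ Y.card = m} with hB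
  have hAne : A.Nonempty := by
    have hWne : W ≠ ⊥ := by
      intro h
      rw [Matrix.rank_eq_finrank_span_row, Matrix.row, ← hW, h, finrank_bot] at hG
      omega
    obtain ⟨v, hv, hne⟩ := Submodule.exists_mem_ne_zero_of_ne_bot hWne
    exact ⟨hammingNorm v, v, hv, hne, rfl⟩
  have hAB : A ⊆ B := by
    rintro w ⟨v, hv, hne, rfl⟩
    refine ⟨Finset.univ.filter (fun e => v e ≠ 0), ?_, rfl⟩
    rw [colRank_lt_iff]
    refine ⟨v, hv, hne, fun e he => ?_⟩
    by_contra h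
    exact he (Finset.mem_filter.mpr ⟨Finset.mem_univ e, h⟩)
  have hBne : B.Nonempty := hAne.mono hAB
  apply le_antisymm
  · obtain ⟨Y, hY, hcard⟩ := Nat.sInf_mem hBne
    rw [colRank_lt_iff] at hY
    obtain ⟨v, hv, hne, hz⟩ := hY
    have h1 : hammingNorm v ∈ A := ⟨v, hv, hne, rfl⟩
    have h2 : hammingNorm v ≤ Y.card := by
      apply Finset.card_le_card
      intro e he
      simp only [Finset.mem_filter, Finset.mem_univ, true_and] at he
      by_contra h
      exact he (hz e h)
    exact le_trans (Nat.sInf_le h1) (hcard ▸ h2)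
  · exact Nat.sInf_le (hAB (Nat.sInf_mem hAne))
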